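/- If X is a topological space with a k_ω-decomposition X = ⋃ₙ Kₙ and q : X → Y is a quotient map onto a Hausdorff space Y, then Y = ⋃ₙ q(Kₙ) is a k_ω-decomposition of Y. -/

import Mathlib

/-- If `X` has a `k_ω`-decomposition `X = ⋃ n, K n` and `q : X → Y` is a quotient map onto a
Hausdorff space `Y`, then `(q '' K n)` is a `k_ω`-decomposition of `Y`. -/
theorem kOmega_of_quotient {X Y : Type*} [TopologicalSpace X] [TopologicalSpace Y] [T2Space Y]
    (q : X → Y) (hq : Topology.IsQuotientMap q) (K : ℕ → Set X) (hmono : Monotone K)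
    (hcomp : ∀ n, IsCompact (K n)) (hunion : (⋃ n, K n) = Set.univ)
    (hclosed : ∀ A : Set X, IsClosed A ↔ ∀ n, IsClosed (A ∩ K n)) :
    Monotone (fun n => q '' K n) ∧ (∀ n, IsCompact (q '' K n)) ∧
      (⋃ n, q '' K n) = Set.univ ∧
      ∀ B : Set Y, IsClosed B ↔ ∀ n, IsClosed (B ∩ q '' K n) := by
  have hcomp' : ∀ n, IsCompact (q '' K n) := fun n => (hcomp n).image hq.continuous
  refine ⟨fun m n hmn => Set.image_mono (f := q) (hmono hmn), hcomp', ?_, ?_⟩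
  · rw [← Set.image_iUnion, hunion, Set.image_univ, hq.surjective.range_eq]
  · intro B
    constructor
    · intro hB n
      exact hB.inter (hcomp' n).isClosed
    · intro h
      rw [← hq.isClosed_preimage]
      rw [hclosed]
      intro n
      have key : q ⁻¹' B ∩ K n = q ⁻¹' (B ∩ q '' K n) ∩ K n := by
        ext x
        simp only [Set.mem_inter_iff, Set.mem_preimage]
        exact ⟨fun ⟨h1, h2⟩ => ⟨⟨h1, ⟨x, h2, rfl⟩⟩, h2⟩, fun ⟨⟨h1, _⟩, h2⟩ => ⟨h1, h2⟩⟩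
      rw [key]
      exact ((hclosed _).mp ((h n).preimage hq.continuous)) n
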